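/- For every tree T, Tr(T) − 1 ≤ TTr(T) ≤ Tr(T), where Tr(T) is the transitivity of T and TTr(T) is the tournament transitivity of T. -/

import Mathlib

open SimpleGraph

variable {V : Type*}

/-- `A` dominates `B` if every vertex of `B` has a neighbour in `A`. -/
def Dominates (G : SimpleGraph V) (A B : Set V) : Prop :=
  ∀ b ∈ B, ∃ a ∈ A, G.Adj a b

/-- An ordered partition `V₁,…,V_k` (encoded as `f : V → Fin k`, surjective,
with `V_i = f ⁻¹' {i}`) is a transitive partition if `V_i` dominates `V_j` for `i < j`. -/
def IsTrPartition (G : SimpleGraph V) {k : ℕ} (f : V → Fin k) : Prop :=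
  Function.Surjective f ∧
    ∀ i j : Fin k, i < j → Dominates G (f ⁻¹' {i}) (f ⁻¹' {j})

/-- Tournament transitive partition: additionally `V_j` does not dominate `V_i` for `i < j`. -/
def IsTTPartition (G : SimpleGraph V) {k : ℕ} (f : V → Fin k) : Prop :=
  Function.Surjective f ∧
    ∀ i j : Fin k, i < j →
      Dominates G (f ⁻¹' {i}) (f ⁻¹' {j}) ∧ ¬ Dominates G (f ⁻¹' {j}) (f ⁻¹' {i})

/-- Transitivity: the maximum size of a transitive partition. -/
noncomputable def Tr (G : SimpleGraph V) : ℕ :=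
  sSup {k | ∃ f : V → Fin k, IsTrPartition G f}

/-- Tournament transitivity: the maximum size of a tournament transitive partition. -/
noncomputable def TTr (G : SimpleGraph V) : ℕ :=
  sSup {k | ∃ f : V → Fin k, IsTTPartition G f}

namespace TTrAux

/-- "Level" of a strictly increasing list over `Fin m`: the head, or `m` for `[]`. -/
def lvl (m : ℕ) : List (Fin m) → ℕ
  | [] => m
  | i :: _ => i.val

@[simp] lemma lvl_nil (m : ℕ) : lvl m ([] : List (Fin m)) = m := rfl

@[simp] lemma lvl_cons (m : ℕ) (i : Fin m) (t : List (Fin m)) :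
    lvl m (i :: t) = i.val := rfl

lemma lvl_le (m : ℕ) (l : List (Fin m)) : lvl m l ≤ m := by
  cases l with
  | nil => simp [lvl_nil, lvl_cons]
  | cons i t => exact le_of_lt i.isLt

lemma lvl_eq_top {m : ℕ} {l : List (Fin m)} (h : lvl m l = m) : l = [] := by
  cases l with
  | nil => rfl
  | cons i t => exact absurd h (by simpa [lvl_nil, lvl_cons] using i.isLt.ne)

lemma sorted_head_lt {m : ℕ} {i : Fin m} {l : List (Fin m)}
    (hs : (i :: l).Chain' (· < ·)) : (i : ℕ) < lvl m l := by
  cases l with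
  | nil => exact i.isLt
  | cons j t => exact (List.isChain_cons_cons.mp hs).1

lemma chain'_cons_of {m : ℕ} {i : Fin m} {l : List (Fin m)}
    (hs : l.Chain' (· < ·)) (h : (i : ℕ) < lvl m l) : (i :: l).Chain' (· < ·) := by
  cases l with
  | nil => exact List.isChain_singleton _
  | cons j t => exact List.isChain_cons_cons.mpr ⟨h, hs⟩

variable {k : ℕ}

open scoped Classical in
/-- The embedded binomial-tree structure: `phi T f r l` is the vertex of `T` indexed by
the strictly increasing list `l` (its "ancestor chain" is obtained by removing heads). -/
noncomputable def phi (T : SimpleGraph V) (f : V → Fin k) (r : V) :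
    List (Fin (k - 1)) → V
  | [] => r
  | i :: l =>
      if h : ∃ y, T.Adj (phi T f r l) y ∧ (f y).val = (i : ℕ) then h.choose else r

lemma phi_spec {T : SimpleGraph V} {f : V → Fin k} {r : V}
    (hf : IsTrPartition T f) (hr : (f r).val = k - 1) :
    ∀ l : List (Fin (k - 1)), l.Chain' (· < ·) →
      (f (phi T f r l)).val = lvl (k - 1) l := by
  intro l
  induction l with
  | nil => intro _; simpa [phi, lvl_nil, lvl_cons] using hr
  | cons i l ih =>
    intro hs
    have hlt : (i : ℕ) < lvl (k - 1) l := sorted_head_lt hs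
    have hfl := ih hs.tail
    have hex : ∃ y, T.Adj (phi T f r l) y ∧ (f y).val = (i : ℕ) := by
      have hij : (⟨(i : ℕ), lt_of_lt_of_le i.isLt (Nat.sub_le k 1)⟩ : Fin k)
          < f (phi T f r l) := by
        rw [Fin.lt_def]; simpa [hfl] using hlt
      obtain ⟨a, ha, hadj⟩ := hf.2 _ _ hij (phi T f r l) rfl
      exact ⟨a, hadj.symm, by simpa using congrArg Fin.val ha⟩
    simp only [phi, dif_pos hex, lvl_nil, lvl_cons]
    exact hex.choose_spec.2

lemma phi_adj {T : SimpleGraph V} {f : V → Fin k} {r : V}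
    (hf : IsTrPartition T f) (hr : (f r).val = k - 1)
    {i : Fin (k - 1)} {l : List (Fin (k - 1))}
    (hs : (i :: l).Chain' (· < ·)) : T.Adj (phi T f r l) (phi T f r (i :: l)) := by
  have hlt : (i : ℕ) < lvl (k - 1) l := sorted_head_lt hs
  have hfl := phi_spec hf hr l hs.tail
  have hex : ∃ y, T.Adj (phi T f r l) y ∧ (f y).val = (i : ℕ) := by
    have hij : (⟨(i : ℕ), lt_of_lt_of_le i.isLt (Nat.sub_le k 1)⟩ : Fin k)
        < f (phi T f r l) := by
      rw [Fin.lt_def]; simpa [hfl] using hlt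
    obtain ⟨a, ha, hadj⟩ := hf.2 _ _ hij (phi T f r l) rfl
    exact ⟨a, hadj.symm, by simpa using congrArg Fin.val ha⟩
  simp only [phi, dif_pos hex]
  exact hex.choose_spec.1

/-- The ancestor walk from `phi l` up to the root `r`. -/
noncomputable def cw {T : SimpleGraph V} {f : V → Fin k} {r : V}
    (hf : IsTrPartition T f) (hr : (f r).val = k - 1) :
    (l : List (Fin (k - 1))) → l.Chain' (· < ·) → T.Walk (phi T f r l) r
  | [], _ => Walk.nil
  | i :: l, hs => Walk.cons (phi_adj hf hr hs).symm (cw hf hr l hs.tail)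

lemma cw_support {T : SimpleGraph V} {f : V → Fin k} {r : V}
    (hf : IsTrPartition T f) (hr : (f r).val = k - 1) :
    ∀ (l : List (Fin (k - 1))) (hs : l.Chain' (· < ·)) (z : V),
      z ∈ (cw hf hr l hs).support → lvl (k - 1) l ≤ (f z).val := by
  intro l
  induction l with
  | nil =>
    intro hs z hz
    simp only [cw, Walk.support_nil, List.mem_singleton] at hz
    change z ∈ [r] at hz
    rw [List.mem_singleton] at hz
    subst hz; simp [lvl_nil, lvl_cons, hr]
  | cons i l ih =>
    intro hs z hz
    simp only [cw, Walk.support_cons, List.mem_cons] at hz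
    rcases hz with hz | hz
    · subst hz
      simp [lvl_nil, lvl_cons, phi_spec hf hr _ hs]
    · exact le_trans (le_of_lt (sorted_head_lt hs)) (ih hs.tail z hz)

lemma cw_path {T : SimpleGraph V} {f : V → Fin k} {r : V}
    (hf : IsTrPartition T f) (hr : (f r).val = k - 1) :
    ∀ (l : List (Fin (k - 1))) (hs : l.Chain' (· < ·)), (cw hf hr l hs).IsPath := by
  intro l
  induction l with
  | nil => intro hs; simp [cw]; exact Walk.IsPath.nil
  | cons i l ih =>
    intro hs
    simp only [cw]
    refine Walk.IsPath.cons (ih hs.tail) ?_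
    intro hmem
    have h1 := cw_support hf hr l hs.tail _ hmem
    have h2 := phi_spec hf hr (i :: l) hs
    have h3 := sorted_head_lt hs
    simp only [lvl_nil, lvl_cons] at h2
    omega

lemma two_paths {T : SimpleGraph V} (hac : T.IsAcyclic) {x y : V} {w₁ w₂ : T.Walk x y}
    (h₁ : w₁.IsPath) (h₂ : w₂.IsPath) (hne : w₁.support ≠ w₂.support) : False := by
  have h := hac.path_unique ⟨w₁, h₁⟩ ⟨w₂, h₂⟩
  exact hne (congrArg (fun p : T.Path x y => p.1.support) h)

lemma phi_inj {T : SimpleGraph V} {f : V → Fin k} {r : V}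
    (hf : IsTrPartition T f) (hr : (f r).val = k - 1) (hac : T.IsAcyclic) :
    ∀ l l' : List (Fin (k - 1)), l.Chain' (· < ·) → l'.Chain' (· < ·) →
      phi T f r l = phi T f r l' → l = l' := by
  intro l
  induction l with
  | nil =>
    intro l' _ hs' he
    have h2 := phi_spec hf hr l' hs'
    have hnil : phi T f r [] = r := by simp [phi]
    rw [← he, hnil, hr] at h2
    exact (lvl_eq_top h2.symm).symm
  | cons i t ih =>
    intro l' hs hs' he
    cases l' with
    | nil =>
      exfalso
      have h2 := phi_spec hf hr (i :: t) hs
      have hnil : phi T f r [] = r := by simp [phi]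
      rw [he, hnil, hr] at h2
      simp only [lvl_cons] at h2
      have := i.isLt
      omega
    | cons i' t' =>
      have h1 := phi_spec hf hr (i :: t) hs
      have h2 := phi_spec hf hr (i' :: t') hs'
      rw [he] at h1
      have hv : (i : ℕ) = (i' : ℕ) := by
        simp only [lvl_nil, lvl_cons] at h1 h2; omega
      have hii : i = i' := Fin.ext hv
      subst hii
      by_cases ht : phi T f r t = phi T f r t'
      · rw [ih t' hs.tail hs'.tail ht]
      · exfalso
        refine two_paths hac (cw_path hf hr (i :: t) hs)
          ((Walk.isPath_copy _ he.symm rfl).mpr (cw_path hf hr (i :: t') hs')) ?_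
        intro hsup
        simp only [cw, Walk.support_copy, Walk.support_cons] at hsup
        have htails : (cw hf hr t hs.tail).support = (cw hf hr t' hs'.tail).support :=
          (List.cons_eq_cons.mp hsup).2
        apply ht
        have e1 := Walk.support_eq_cons (cw hf hr t hs.tail)
        have e2 := Walk.support_eq_cons (cw hf hr t' hs'.tail)
        rw [e1, e2] at htails
        exact (List.cons_eq_cons.mp htails).1

lemma adj_child {T : SimpleGraph V} {f : V → Fin k} {r : V}
    (hf : IsTrPartition T f) (hr : (f r).val = k - 1) (hac : T.IsAcyclic) :
    ∀ l l' : List (Fin (k - 1)), l.Chain' (· < ·) → l'.Chain' (· < ·) →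
      T.Adj (phi T f r l) (phi T f r l') → lvl (k - 1) l < lvl (k - 1) l' →
      ∃ i, l = i :: l' := by
  intro l l' hs hs' hadj hlt
  cases l with
  | nil =>
    exact absurd hlt (by simpa [lvl_nil, lvl_cons] using lvl_le (k - 1) l')
  | cons i t =>
    by_cases ht : phi T f r t = phi T f r l'
    · have := phi_inj hf hr hac t l' hs.tail hs' ht
      exact ⟨i, by rw [this]⟩
    · exfalso
      have hw₂path : (Walk.cons hadj (cw hf hr l' hs')).IsPath := by
        refine Walk.IsPath.cons (cw_path hf hr l' hs') ?_
        intro hmem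
        have h4 := cw_support hf hr l' hs' _ hmem
        have h1 := phi_spec hf hr (i :: t) hs
        simp only [lvl_nil, lvl_cons] at h1 hlt ⊢
        omega
      refine two_paths hac (cw_path hf hr (i :: t) hs) hw₂path ?_
      intro hsup
      simp only [cw, Walk.support_cons] at hsup
      have htails : (cw hf hr t hs.tail).support = (cw hf hr l' hs').support :=
        (List.cons_eq_cons.mp hsup).2
      apply ht
      have e1 := Walk.support_eq_cons (cw hf hr t hs.tail)
      have e2 := Walk.support_eq_cons (cw hf hr l' hs')
      rw [e1, e2] at htails
      exact (List.cons_eq_cons.mp htails).1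

lemma adj_eq_lvl {T : SimpleGraph V} {f : V → Fin k} {r : V}
    (hf : IsTrPartition T f) (hr : (f r).val = k - 1) (hac : T.IsAcyclic) :
    ∀ l l' : List (Fin (k - 1)), l.Chain' (· < ·) → l'.Chain' (· < ·) →
      T.Adj (phi T f r l) (phi T f r l') → lvl (k - 1) l = lvl (k - 1) l' → False := by
  intro l l' hs hs' hadj heq
  cases l with
  | nil =>
    cases l' with
    | nil => exact hadj.ne rfl
    | cons i' t' => exact absurd heq.symm (by simpa [lvl_nil, lvl_cons] using i'.isLt.ne)
  | cons i t =>
    cases l' with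
    | nil => exact absurd heq (by simpa [lvl_nil, lvl_cons] using i.isLt.ne)
    | cons i' t' =>
      have hxy : phi T f r (i :: t) ≠ phi T f r (i' :: t') := hadj.ne
      have h1 := phi_spec hf hr (i :: t) hs
      have h2 := phi_spec hf hr (i' :: t') hs'
      have hw₂path : (Walk.cons hadj (cw hf hr (i' :: t') hs')).IsPath := by
        refine Walk.IsPath.cons (cw_path hf hr (i' :: t') hs') ?_
        intro hmem
        simp only [cw, Walk.support_cons, List.mem_cons] at hmem
        rcases hmem with hmem | hmem
        · exact hxy hmem
        · have h4 := cw_support hf hr t' hs'.tail _ hmem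
          have h3 := sorted_head_lt hs'
          simp only [lvl_nil, lvl_cons] at heq h1
          omega
      refine two_paths hac (cw_path hf hr (i :: t) hs) hw₂path ?_
      intro hsup
      simp only [cw, Walk.support_cons] at hsup
      have htails : (cw hf hr t hs.tail).support
          = phi T f r (i' :: t') :: (cw hf hr t' hs'.tail).support :=
        (List.cons_eq_cons.mp hsup).2
      have e1 := Walk.support_eq_cons (cw hf hr t hs.tail)
      rw [e1] at htails
      have hht : phi T f r t = phi T f r (i' :: t') := (List.cons_eq_cons.mp htails).1
      have h4 := phi_spec hf hr t hs.tail
      rw [hht] at h4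
      have h5 := sorted_head_lt hs
      simp only [lvl_nil, lvl_cons] at h2 h4 heq
      omega

/-- Key structural fact: any edge of `T` between structure vertices is a parent–child edge. -/
lemma phi_nbr {T : SimpleGraph V} {f : V → Fin k} {r : V}
    (hf : IsTrPartition T f) (hr : (f r).val = k - 1) (hac : T.IsAcyclic)
    {l l' : List (Fin (k - 1))} (hs : l.Chain' (· < ·)) (hs' : l'.Chain' (· < ·))
    (hadj : T.Adj (phi T f r l) (phi T f r l')) :
    (∃ i, l = i :: l') ∨ (∃ i, l' = i :: l) := by
  rcases lt_trichotomy (lvl (k - 1) l) (lvl (k - 1) l') with h | h | h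
  · exact Or.inl (adj_child hf hr hac l l' hs hs' hadj h)
  · exact absurd h (fun hh => adj_eq_lvl hf hr hac l l' hs hs' hadj hh)
  · exact Or.inr (adj_child hf hr hac l' l hs' hs hadj.symm h)

end TTrAux

open TTrAux in
/-- The key construction: from a transitive partition of size `k ≥ 3` of an acyclic graph
we get a tournament transitive partition of size `k - 1`. -/
theorem exists_tt_of_tr {V : Type*} {T : SimpleGraph V} (hac : T.IsAcyclic) {k : ℕ}
    (hk : 3 ≤ k) (f : V → Fin k) (hf : IsTrPartition T f) :
    ∃ g : V → Fin (k - 1), IsTTPartition T g := by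
  classical
  obtain ⟨r, hrEq⟩ := hf.1 ⟨k - 1, by omega⟩
  have hr : (f r).val = k - 1 := by rw [hrEq]
  set cap : ℕ → ℕ := fun b => if b = k - 1 then k - 2 else min b (k - 3) with hcap
  have hcaplt : ∀ b, cap b < k - 1 := by
    intro b
    simp only [hcap]
    split
    · omega
    · exact lt_of_le_of_lt (min_le_right _ _) (by omega)
  set P : V → Prop := fun v => ∃ l : List (Fin (k - 1)), l.Chain' (· < ·) ∧ phi T f r l = v
    with hP
  set g : V → Fin (k - 1) := fun v => if P v then ⟨cap (f v).val, hcaplt _⟩ else ⟨0, by omega⟩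
    with hg
  have hgP : ∀ v, P v → (g v).val = cap (f v).val := by
    intro v hv; simp only [hg, if_pos hv]
  have hgphi : ∀ (l : List (Fin (k - 1))), l.Chain' (· < ·) →
      (g (phi T f r l)).val = cap (lvl (k - 1) l) := by
    intro l hs
    rw [hgP _ ⟨l, hs, rfl⟩, phi_spec hf hr l hs]
  have mem_j : ∀ (j : Fin (k - 1)) (b : V), 1 ≤ (j : ℕ) → g b = j →
      ∃ l, l.Chain' (· < ·) ∧ phi T f r l = b ∧ cap (lvl (k - 1) l) = (j : ℕ) := by
    intro j b hj hb
    by_cases hPb : P b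
    · obtain ⟨l, hs, hl⟩ := hPb
      refine ⟨l, hs, hl, ?_⟩
      rw [← hgphi l hs, hl, hb]
    · exfalso
      have h0 : (g b).val = 0 := by simp only [hg, if_neg hPb]
      rw [hb] at h0
      omega
  refine ⟨g, ?_, ?_⟩
  · -- surjectivity
    intro j
    by_cases hj : (j : ℕ) = k - 2
    · refine ⟨r, ?_⟩
      have hgr : (g r).val = cap (k - 1) := by
        rw [hgP r ⟨[], List.isChain_nil, rfl⟩, hr]
      apply Fin.ext
      rw [hgr, hj]
      simp [hcap]
    · have hjle : (j : ℕ) ≤ k - 3 := by have := j.isLt; omega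
      refine ⟨phi T f r [⟨(j : ℕ), by omega⟩], ?_⟩
      apply Fin.ext
      rw [hgphi _ (List.isChain_singleton _)]
      simp only [lvl_nil, lvl_cons, hcap]
      rw [if_neg (by omega)]
      omega
  · intro i j hij
    have hijv : (i : ℕ) < (j : ℕ) := Fin.lt_def.mp hij
    have hj1 : 1 ≤ (j : ℕ) := by omega
    have hik := i.isLt
    have hjk := j.isLt
    constructor
    · -- forward domination
      intro b hb
      obtain ⟨l, hs, hl, hcapl⟩ := mem_j j b hj1 hb
      have hjlvl : (j : ℕ) ≤ lvl (k - 1) l := by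
        by_cases htop : lvl (k - 1) l = k - 1
        · rw [htop]; omega
        · simp only [hcap] at hcapl; simp only [if_neg htop] at hcapl; omega
      have hilt : (i : ℕ) < lvl (k - 1) l := by omega
      have hsc : ((⟨(i : ℕ), i.isLt⟩ : Fin (k - 1)) :: l).Chain' (· < ·) :=
        chain'_cons_of hs hilt
      refine ⟨phi T f r (⟨(i : ℕ), i.isLt⟩ :: l), ?_, ?_⟩
      · show g _ = i
        apply Fin.ext
        rw [hgphi _ hsc]
        simp only [lvl_nil, lvl_cons, hcap]
        rw [if_neg (by omega)]
        omega
      · rw [← hl]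
        exact (phi_adj hf hr hsc).symm
    · -- no backward domination
      intro hdom
      by_cases hjtop : (j : ℕ) = k - 2
      · -- witness: phi [i, i+1]
        have hi1 : (i : ℕ) + 1 < k - 1 := by omega
        set l₀ : List (Fin (k - 1)) := [⟨(i : ℕ), i.isLt⟩, ⟨(i : ℕ) + 1, hi1⟩] with hl₀
        have hs₀ : l₀.Chain' (· < ·) := by
          simp only [hl₀, List.Chain', List.isChain_cons_cons, List.isChain_singleton, and_true]
          exact Nat.lt_succ_self _
        have hgx : g (phi T f r l₀) = i := by
          apply Fin.ext
          rw [hgphi _ hs₀]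
          simp only [hl₀, lvl_nil, lvl_cons, hcap]
          rw [if_neg (by omega)]
          omega
        obtain ⟨a, haj, hadj⟩ := hdom (phi T f r l₀) hgx
        obtain ⟨l', hs', hl', hcapl'⟩ := mem_j j a hj1 haj
        have hlvl' : lvl (k - 1) l' = k - 1 := by
          by_contra hne
          simp only [hcap] at hcapl'
          simp only [if_neg hne] at hcapl'
          omega
        have hl'nil : l' = [] := lvl_eq_top hlvl'
        subst hl'nil
        rw [← hl'] at hadj
        rcases phi_nbr hf hr hac List.isChain_nil hs₀ hadj with ⟨i₂, h⟩ | ⟨i₂, h⟩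
        · exact absurd h (by simp)
        · simp only [hl₀] at h
          exact absurd (List.cons_eq_cons.mp h).2 (by simp)
      · -- j ≤ k - 3 ; witness: phi [i]
        have hjle : (j : ℕ) ≤ k - 3 := by omega
        set l₀ : List (Fin (k - 1)) := [⟨(i : ℕ), i.isLt⟩] with hl₀
        have hs₀ : l₀.Chain' (· < ·) := by simp [hl₀, List.Chain']
        have hgx : g (phi T f r l₀) = i := by
          apply Fin.ext
          rw [hgphi _ hs₀]
          simp only [hl₀, lvl_nil, lvl_cons, hcap]
          rw [if_neg (by omega)]
          omega
        obtain ⟨a, haj, hadj⟩ := hdom (phi T f r l₀) hgx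
        obtain ⟨l', hs', hl', hcapl'⟩ := mem_j j a hj1 haj
        rw [← hl'] at hadj
        rcases phi_nbr hf hr hac hs' hs₀ hadj with ⟨i₂, h⟩ | ⟨i₂, h⟩
        · -- a is a child of the witness: its level is < i < j, contradiction
          subst h
          have hlt : (i₂ : ℕ) < (i : ℕ) := by
            have := sorted_head_lt hs'
            simpa [hl₀, lvl_nil, lvl_cons] using this
          have hi₂k := i₂.isLt
          simp only [hcap] at hcapl'
          rw [if_neg (show ¬ lvl (k - 1) (i₂ :: l₀) = k - 1 by simp only [lvl_cons]; omega)] at hcapl'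
          simp only [lvl_nil, lvl_cons] at hcapl'
          omega
        · -- the witness is a child of a : then a = r with class k-2 ≠ j
          simp only [hl₀] at h
          obtain ⟨hh, htl⟩ := List.cons_eq_cons.mp h
          rw [← htl] at hcapl'
          simp [lvl_nil, lvl_cons, hcap] at hcapl'
          omega

theorem stmt_15 [Fintype V] (T : SimpleGraph V) (h : T.IsTree) :
    Tr T - 1 ≤ TTr T ∧ TTr T ≤ Tr T := by
  classical
  obtain ⟨v₀⟩ : Nonempty V := h.1.nonempty
  have h1tt : (1 : ℕ) ∈ {k | ∃ f : V → Fin k, IsTTPartition T f} := by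
    refine ⟨fun _ => 0, fun b => ⟨v₀, Subsingleton.elim _ _⟩, ?_⟩
    intro i j hij
    have h1 := Fin.lt_def.mp hij
    have h2 := j.isLt
    omega
  have h1tr : (1 : ℕ) ∈ {k | ∃ f : V → Fin k, IsTrPartition T f} := by
    obtain ⟨f, hf1, _⟩ := h1tt
    exact ⟨f, hf1, fun i j hij => by
      have h1 := Fin.lt_def.mp hij
      have h2 := j.isLt
      omega⟩
  have bddTr : BddAbove {k | ∃ f : V → Fin k, IsTrPartition T f} := by
    refine ⟨Fintype.card V, ?_⟩
    rintro n ⟨f, hf⟩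
    simpa using Fintype.card_le_of_surjective f hf.1
  have bddTT : BddAbove {k | ∃ f : V → Fin k, IsTTPartition T f} := by
    refine ⟨Fintype.card V, ?_⟩
    rintro n ⟨f, hf⟩
    simpa using Fintype.card_le_of_surjective f hf.1
  have hsub : {k | ∃ f : V → Fin k, IsTTPartition T f}
      ⊆ {k | ∃ f : V → Fin k, IsTrPartition T f} := by
    rintro n ⟨f, hf1, hf2⟩
    exact ⟨f, hf1, fun i j hij => (hf2 i j hij).1⟩
  constructor
  · have hTrmem : Tr T ∈ {k | ∃ f : V → Fin k, IsTrPartition T f} :=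
      Nat.sSup_mem ⟨1, h1tr⟩ bddTr
    obtain ⟨f, hf⟩ := hTrmem
    by_cases hk : Tr T ≤ 2
    · calc Tr T - 1 ≤ 1 := by omega
        _ ≤ TTr T := le_csSup bddTT h1tt
    · have hk3 : 3 ≤ Tr T := by omega
      obtain ⟨g, hg⟩ := exists_tt_of_tr h.2 hk3 f hf
      exact le_csSup bddTT ⟨g, hg⟩
  · exact csSup_le_csSup bddTr ⟨1, h1tt⟩ hsub
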